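/- The Moser spindle M satisfies m_3(M) = 1/11: every 3-coloring of its 7 vertices produces at least one monochromatic edge (so M is not properly 3-colorable), and some 3-coloring produces exactly one monochromatic edge among its 11 edges. -/

import Mathlib

open MeasureTheory Real

noncomputable section

-- Number of monochromatic edges of `G` under the vertex coloring `χ`.
open Classical in
def monoCount {V : Type} [Fintype V] {k : ℕ} (G : SimpleGraph V) (χ : V → Fin k) : ℕ :=
  (G.edgeFinset.filter fun e => (e.map χ).IsDiag).card

-- `m_k(G)`: the least fraction of monochromatic edges over all `k`-colorings of `G`.
open Classical in
def mval {V : Type} [Fintype V] (k : ℕ) (G : SimpleGraph V) : ℝ :=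
  ⨅ χ : V → Fin k, (monoCount G χ : ℝ) / (G.edgeFinset.card : ℝ)

/-- The edges of the Moser spindle: two rhombi of equilateral triangles sharing the
apex `0`, plus the edge `{3, 6}`. -/
def moserEdges : Finset (Sym2 (Fin 7)) :=
  {s(0,1), s(0,2), s(1,2), s(1,3), s(2,3), s(0,4), s(0,5), s(4,5), s(4,6), s(5,6), s(3,6)}

/-- The Moser spindle graph on the vertex set `{0, …, 6}`. -/
def moser : SimpleGraph (Fin 7) where
  Adj a b := s(a, b) ∈ moserEdges
  symm := ⟨by intro a b h; rwa [Sym2.eq_swap]⟩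
  loopless := ⟨by intro a; fin_cases a <;> decide⟩

instance : DecidableRel moser.Adj :=
  fun a b => inferInstanceAs (Decidable (s(a, b) ∈ moserEdges))

lemma edgeFinset_any (inst : Fintype moser.edgeSet) :
    @SimpleGraph.edgeFinset _ moser inst = moserEdges := by
  ext e
  rw [SimpleGraph.mem_edgeFinset]
  induction e using Sym2.ind with
  | _ a b => exact Iff.rfl

lemma mono_eq (χ : Fin 7 → Fin 3) :
    monoCount moser χ = (moserEdges.filter fun e => (e.map χ).IsDiag).card := by
  rw [monoCount, edgeFinset_any]

set_option maxRecDepth 10000 in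
set_option maxHeartbeats 2000000 in
lemma key1' : ∀ a b c d e f g : Fin 3,
    1 ≤ (moserEdges.filter fun s => (s.map ![a,b,c,d,e,f,g]).IsDiag).card := by
  decide

lemma key1 : ∀ χ : Fin 7 → Fin 3, 1 ≤ (moserEdges.filter fun e => (e.map χ).IsDiag).card := by
  intro χ
  have hχ : χ = ![χ 0, χ 1, χ 2, χ 3, χ 4, χ 5, χ 6] := by
    funext i; fin_cases i <;> rfl
  rw [hχ]
  exact key1' _ _ _ _ _ _ _

lemma key2 : ((moserEdges.filter fun e => ((e.map (![0,1,2,0,1,2,0] : Fin 7 → Fin 3))).IsDiag).card) = 1 := by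
  decide

/-- `m_3` of the Moser spindle equals `1/11`: the spindle has 11 edges, every 3-coloring
of its 7 vertices produces at least one monochromatic edge (it is not properly
3-colorable), and some 3-coloring produces exactly one monochromatic edge. -/
theorem stmt12 :
    moser.edgeFinset.card = 11 ∧
    (∀ χ : Fin 7 → Fin 3, 1 ≤ monoCount moser χ) ∧
    (∃ χ : Fin 7 → Fin 3, monoCount moser χ = 1) ∧
    mval 3 moser = 1 / 11 := by
  have hcardA : ∀ (inst : Fintype moser.edgeSet),
      (@SimpleGraph.edgeFinset _ moser inst).card = 11 := by
    intro inst; rw [edgeFinset_any]; decide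
  have h1 : ∀ χ : Fin 7 → Fin 3, 1 ≤ monoCount moser χ := fun χ => by
    rw [mono_eq]; exact key1 χ
  have h2 : monoCount moser (![0,1,2,0,1,2,0] : Fin 7 → Fin 3) = 1 := by
    rw [mono_eq]; exact key2
  refine ⟨hcardA _, h1, ⟨_, h2⟩, ?_⟩
  rw [mval, hcardA]
  apply le_antisymm
  · have := ciInf_le (f := fun χ : Fin 7 → Fin 3 => (monoCount moser χ : ℝ) / 11)
      ⟨0, fun x ⟨χ, hχ⟩ => by simp [← hχ]; positivity⟩ (![0,1,2,0,1,2,0] : Fin 7 → Fin 3)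
    simpa [h2] using this
  · apply le_ciInf
    intro χ
    rw [div_le_div_iff₀ (by norm_num) (by norm_num)]
    have := h1 χ
    have : (1:ℝ) ≤ (monoCount moser χ : ℝ) := by exact_mod_cast this
    push_cast
    linarith
end
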